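/- arXiv:2508.04884 — 2 statements merged into one kernel-verified Lean document; each statement's English description precedes it below -/
import Mathlib

section
/- Let β : [0,1] → ℝ be continuous with β(s) > 0 for all s, set α_t = exp(−∫₀^t β(s) ds), let N ≥ 1 and T ≥ 1. Let Λ(t) = ∫₀^t √( N·(α'_s)²/(α_s·(1−α_s)) ) ds, let φ*(t) = Λ⁻¹(Λ(1)·t) be the geodesic schedule generator, and let t_i* = φ*(i/T) for 0 ≤ i ≤ T. Then the optimal schedule satisfies α_{t_i*} = cos²( (i/T)·(π/2 − arcsin(√α₁)) ) for every 0 ≤ i ≤ T. -/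
open Set MeasureTheory Real

set_option maxHeartbeats 1000000 in
/-- For masked discrete diffusion with `N ≥ 1` tokens, noise
schedule `α_t = exp(−∫₀^t β(s) ds)` (`β` continuous positive on `[0,1]`), cumulative
Fisher–Rao length `Λ(t) = ∫₀^t √(N·(α'_s)²/(α_s(1−α_s))) ds`, geodesic schedule
generator `φ*` (characterised by `Λ(φ*(t)) = Λ(1)·t`, mapping `[0,1]` to `[0,1]`),
and `t_i* = φ*(i/T)` for `0 ≤ i ≤ T`, the optimal schedule satisfies
`α_{t_i*} = cos²((i/T)·(π/2 − arcsin √(α₁)))`. -/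
theorem stmt11 (β : ℝ → ℝ) (hβc : ContinuousOn β (Icc 0 1))
    (hβpos : ∀ s ∈ Icc (0:ℝ) 1, 0 < β s)
    (α : ℝ → ℝ) (hα : ∀ t, α t = Real.exp (-(∫ s in (0:ℝ)..t, β s)))
    (N T : ℕ) (hN : 1 ≤ N) (hT : 1 ≤ T)
    (L : ℝ → ℝ)
    (hL : ∀ t, L t =
      ∫ s in (0:ℝ)..t, Real.sqrt ((N : ℝ) * (deriv α s) ^ 2 / (α s * (1 - α s))))
    (φs : ℝ → ℝ) (hmap : ∀ t ∈ Icc (0:ℝ) 1, φs t ∈ Icc (0:ℝ) 1)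
    (hgeo : ∀ t ∈ Icc (0:ℝ) 1, L (φs t) = L 1 * t) :
    ∀ i : ℕ, i ≤ T →
      α (φs ((i : ℝ) / T))
        = Real.cos (((i : ℝ) / T) * (π / 2 - Real.arcsin (Real.sqrt (α 1)))) ^ 2 := by
  -- basic notation
  set f : ℝ → ℝ := fun s => Real.sqrt ((N : ℝ) * (deriv α s) ^ 2 / (α s * (1 - α s)))
    with hf_def
  set g : ℝ → ℝ := fun s => -2 * Real.sqrt N * Real.arcsin (Real.sqrt (α s)) with hg_def
  have hN0 : (0:ℝ) < (N:ℝ) := by exact_mod_cast Nat.lt_of_lt_of_le Nat.zero_lt_one hN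
  -- bounds on β
  obtain ⟨sM, hsM, hsMmax⟩ := isCompact_Icc.exists_isMaxOn (α := ℝ) (f := β)
    (Set.nonempty_Icc.2 zero_le_one) hβc
  set M : ℝ := β sM with hM_def
  have hMpos : 0 < M := hβpos sM hsM
  obtain ⟨sm, hsm, hsmmin⟩ := isCompact_Icc.exists_isMinOn (α := ℝ) (f := β)
    (Set.nonempty_Icc.2 zero_le_one) hβc
  set m : ℝ := β sm with hm_def
  have hmpos : 0 < m := hβpos sm hsm
  -- integrability of β on subintervals of [0,1]
  have hβint : ∀ t ∈ Icc (0:ℝ) 1, IntervalIntegrable β volume 0 t := by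
    intro t ht
    apply ContinuousOn.intervalIntegrable
    apply hβc.mono
    rw [uIcc_of_le ht.1]
    exact Icc_subset_Icc le_rfl ht.2
  -- the accumulated noise is nonnegative and lower-bounded by m * t on [0,1]
  have hIlb : ∀ t ∈ Icc (0:ℝ) 1, m * t ≤ ∫ s in (0:ℝ)..t, β s := by
    intro t ht
    have h1 : (∫ s in (0:ℝ)..t, m) ≤ ∫ s in (0:ℝ)..t, β s := by
      apply intervalIntegral.integral_mono_on ht.1 (intervalIntegrable_const) (hβint t ht)
      intro x hx
      exact hsmmin (Icc_subset_Icc le_rfl ht.2 hx)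
    simpa [mul_comm] using h1
  have hInn : ∀ t ∈ Icc (0:ℝ) 1, (0:ℝ) ≤ ∫ s in (0:ℝ)..t, β s := by
    intro t ht
    have := hIlb t ht
    nlinarith [ht.1, hmpos.le]
  -- basic facts about α
  have hαpos : ∀ t, 0 < α t := fun t => by rw [hα t]; exact Real.exp_pos _
  have hα0 : α 0 = 1 := by simp [hα 0]
  have hαle1 : ∀ t ∈ Icc (0:ℝ) 1, α t ≤ 1 := by
    intro t ht
    rw [hα t, Real.exp_le_one_iff, neg_nonpos]
    exact hInn t ht
  have hαub : ∀ t ∈ Icc (0:ℝ) 1, α t ≤ Real.exp (-(m * t)) := by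
    intro t ht
    rw [hα t]
    exact Real.exp_le_exp.2 (neg_le_neg (hIlb t ht))
  -- 1 - α t ≥ c * t on [0,1] with c = 1 - exp (-m) > 0
  set c : ℝ := 1 - Real.exp (-m) with hc_def
  have hcpos : 0 < c := by
    have : Real.exp (-m) < 1 := Real.exp_lt_one_iff.2 (by linarith)
    linarith
  have h1α : ∀ t ∈ Icc (0:ℝ) 1, c * t ≤ 1 - α t := by
    intro t ht
    have h2 : Real.exp (-(m * t)) ≤ (1 - t) * 1 + t * Real.exp (-m) := by
      have := convexOn_exp.2 (Set.mem_univ (0:ℝ)) (Set.mem_univ (-m))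
        (by linarith [ht.2] : (0:ℝ) ≤ 1 - t) ht.1 (by ring)
      simpa [smul_eq_mul, mul_comm] using this
    have h3 := hαub t ht
    have h4 : c * t = t - t * Real.exp (-m) := by rw [hc_def]; ring
    linarith
  have hαlt1 : ∀ t ∈ Ioc (0:ℝ) 1, α t < 1 := by
    intro t ht
    have h1 := h1α t ⟨ht.1.le, ht.2⟩
    nlinarith [hcpos, ht.1]
  -- continuity of α on [0,1]
  have hαcont : ContinuousOn α (Icc 0 1) := by
    have hint : IntegrableOn β (uIcc (0:ℝ) 1) volume := by
      rw [uIcc_of_le zero_le_one]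
      exact hβc.integrableOn_Icc
    have hcont := intervalIntegral.continuousOn_primitive_interval (a := (0:ℝ)) (b := 1) hint
    rw [uIcc_of_le zero_le_one] at hcont
    have : ContinuousOn (fun t => Real.exp (-(∫ s in (0:ℝ)..t, β s))) (Icc 0 1) :=
      Real.continuous_exp.comp_continuousOn hcont.neg
    exact this.congr fun t _ => hα t
  -- derivative of α at interior points
  have hαderiv : ∀ x ∈ Ioo (0:ℝ) 1, HasDerivAt α (-(β x * α x)) x := by
    intro x hx
    have hxmem : Icc (0:ℝ) 1 ∈ nhds x := Icc_mem_nhds hx.1 hx.2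
    have hI : HasDerivAt (fun t => ∫ s in (0:ℝ)..t, β s) (β x) x := by
      apply intervalIntegral.integral_hasDerivAt_right (hβint x ⟨hx.1.le, hx.2.le⟩)
      · exact ⟨Icc 0 1, hxmem, (hβc.mono le_rfl).aestronglyMeasurable measurableSet_Icc⟩
      · exact hβc.continuousAt hxmem
    have h2 : HasDerivAt (fun t => Real.exp (-(∫ s in (0:ℝ)..t, β s)))
        (Real.exp (-(∫ s in (0:ℝ)..x, β s)) * (-(β x))) x := (hI.neg).exp
    have h3 : HasDerivAt α (Real.exp (-(∫ s in (0:ℝ)..x, β s)) * (-(β x))) x := by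
      apply h2.congr_of_eventuallyEq
      filter_upwards with t using (hα t)
    have h4 : Real.exp (-(∫ s in (0:ℝ)..x, β s)) * (-(β x)) = -(β x * α x) := by
      rw [hα x]; ring
    rwa [h4] at h3
  have hderiv_eq : ∀ x ∈ Ioo (0:ℝ) 1, deriv α x = -(β x * α x) :=
    fun x hx => (hαderiv x hx).deriv
  -- g has derivative f at interior points
  have hgderiv : ∀ x ∈ Ioo (0:ℝ) 1, HasDerivAt g (f x) x := by
    intro x hx
    have hax : 0 < α x := hαpos x
    have hax1 : α x < 1 := hαlt1 x ⟨hx.1, hx.2.le⟩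
    have hbx : 0 < β x := hβpos x ⟨hx.1.le, hx.2.le⟩
    have hsq : HasDerivAt (fun t => Real.sqrt (α t))
        (1 / (2 * Real.sqrt (α x)) * (-(β x * α x))) x :=
      (Real.hasDerivAt_sqrt hax.ne').comp x (hαderiv x hx)
    have hs1 : Real.sqrt (α x) ≠ 1 := by
      intro h
      have := Real.sq_sqrt hax.le
      rw [h] at this; nlinarith
    have hsneg : Real.sqrt (α x) ≠ -1 := by
      have := Real.sqrt_nonneg (α x); intro h; rw [h] at this; linarith
    have harc : HasDerivAt (fun t => Real.arcsin (Real.sqrt (α t)))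
        (1 / Real.sqrt (1 - Real.sqrt (α x) ^ 2) *
          (1 / (2 * Real.sqrt (α x)) * (-(β x * α x)))) x :=
      by have h := (Real.hasDerivAt_arcsin hsneg hs1).comp x hsq; exact h
    have hg' : HasDerivAt g ((-2 * Real.sqrt N) *
        (1 / Real.sqrt (1 - Real.sqrt (α x) ^ 2) *
          (1 / (2 * Real.sqrt (α x)) * (-(β x * α x))))) x := harc.const_mul _
    have key : (-2 * Real.sqrt N) *
        (1 / Real.sqrt (1 - Real.sqrt (α x) ^ 2) *
          (1 / (2 * Real.sqrt (α x)) * (-(β x * α x)))) = f x := by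
      have hsq_a : Real.sqrt (α x) ^ 2 = α x := Real.sq_sqrt hax.le
      have hfx : f x = Real.sqrt ((N : ℝ) * (deriv α x) ^ 2 / (α x * (1 - α x))) := rfl
      rw [hfx, hderiv_eq x hx, hsq_a]
      have hsa : 0 < Real.sqrt (α x) := Real.sqrt_pos.2 hax
      have hs1a : 0 < Real.sqrt (1 - α x) := Real.sqrt_pos.2 (by linarith)
      have h1 : (-(β x * α x)) ^ 2 = (β x * α x) ^ 2 := by ring
      have h2 : Real.sqrt ((N : ℝ) * (β x * α x) ^ 2 / (α x * (1 - α x)))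
          = Real.sqrt N * (β x * α x) / (Real.sqrt (α x) * Real.sqrt (1 - α x)) := by
        rw [Real.sqrt_div (by positivity), Real.sqrt_mul (by positivity),
          Real.sqrt_sq (by positivity), Real.sqrt_mul hax.le]
      rw [h1, h2]
      have hsaeq : Real.sqrt (α x) * Real.sqrt (α x) = α x := Real.mul_self_sqrt hax.le
      field_simp
    rwa [key] at hg'
  -- f is interval integrable on [0,t] for t ∈ [0,1]
  have hfint : ∀ t ∈ Icc (0:ℝ) 1, IntervalIntegrable f volume 0 t := by
    intro t ht
    rw [intervalIntegrable_iff_integrableOn_Ioo_of_le ht.1]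
    set K : ℝ := Real.sqrt ((N : ℝ) * M ^ 2 / c) with hK_def
    have hKnn : 0 ≤ K := Real.sqrt_nonneg _
    have hnum : (0:ℝ) ≤ (N:ℝ) * M ^ 2 / c := div_nonneg (by positivity) hcpos.le
    have hbound : ∀ s ∈ Ioo (0:ℝ) t, ‖f s‖ ≤ K * s ^ (-(1/2) : ℝ) := by
      intro s hs
      have hs01 : s ∈ Ioo (0:ℝ) 1 := ⟨hs.1, lt_of_lt_of_le hs.2 ht.2⟩
      have has : 0 < α s := hαpos s
      have has1 : α s ≤ 1 := hαle1 s ⟨hs01.1.le, hs01.2.le⟩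
      have hbs : 0 < β s := hβpos s ⟨hs01.1.le, hs01.2.le⟩
      have hbsM : β s ≤ M := hsMmax ⟨hs01.1.le, hs01.2.le⟩
      have h1as : c * s ≤ 1 - α s := h1α s ⟨hs01.1.le, hs01.2.le⟩
      have h1aspos : 0 < 1 - α s := lt_of_lt_of_le (mul_pos hcpos hs.1) h1as
      have hfs : f s = Real.sqrt ((N:ℝ) * (β s * α s) ^ 2 / (α s * (1 - α s))) := by
        have hfx : f s = Real.sqrt ((N : ℝ) * (deriv α s) ^ 2 / (α s * (1 - α s))) := rfl
        rw [hfx, hderiv_eq s hs01]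
        ring_nf
      have hle : (N:ℝ) * (β s * α s) ^ 2 / (α s * (1 - α s)) ≤ (N:ℝ) * M ^ 2 / (c * s) := by
        rw [div_le_div_iff₀ (mul_pos has h1aspos) (mul_pos hcpos hs.1)]
        have hb2 : (β s)^2 ≤ M^2 := by nlinarith
        have hα2 : (α s)^2 ≤ α s := by nlinarith
        have hba : (β s * α s)^2 ≤ M^2 * α s := by nlinarith [sq_nonneg (α s), sq_nonneg M]
        have step1 : (β s * α s)^2 * (c * s) ≤ (M^2 * α s) * (1 - α s) :=
          mul_le_mul hba h1as (mul_pos hcpos hs.1).le (mul_nonneg (sq_nonneg M) has.le)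
        nlinarith [mul_le_mul_of_nonneg_left step1 hN0.le]
      have hfsle : f s ≤ Real.sqrt ((N:ℝ) * M ^ 2 / (c * s)) := by
        rw [hfs]; exact Real.sqrt_le_sqrt hle
      have heq : Real.sqrt ((N:ℝ) * M ^ 2 / (c * s)) = K * s ^ (-(1/2) : ℝ) := by
        rw [← div_div, Real.sqrt_div hnum, Real.rpow_neg hs.1.le, ← Real.sqrt_eq_rpow,
          div_eq_mul_inv]
      rw [Real.norm_of_nonneg (Real.sqrt_nonneg _)]
      calc f s ≤ Real.sqrt ((N:ℝ) * M ^ 2 / (c * s)) := hfsle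
        _ = K * s ^ (-(1/2) : ℝ) := heq
    -- dominating function is integrable
    have hdom : IntervalIntegrable (fun s : ℝ => K * s ^ (-(1/2) : ℝ)) volume 0 t :=
      (intervalIntegral.intervalIntegrable_rpow' (by norm_num)).const_mul K
    rw [intervalIntegrable_iff_integrableOn_Ioo_of_le ht.1] at hdom
    -- measurability of f on (0, t)
    have hmeas : AEStronglyMeasurable f (volume.restrict (Ioo (0:ℝ) t)) := by
      have hα_m : AEMeasurable α (volume.restrict (Ioo (0:ℝ) t)) := by
        have : Ioo (0:ℝ) t ⊆ Icc 0 1 := fun x hx => ⟨hx.1.le, hx.2.le.trans ht.2⟩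
        exact (hαcont.mono this).aemeasurable measurableSet_Ioo
      have hd_m : AEMeasurable (deriv α) (volume.restrict (Ioo (0:ℝ) t)) :=
        (measurable_deriv α).aemeasurable
      have : AEMeasurable (fun s => (N : ℝ) * (deriv α s) ^ 2 / (α s * (1 - α s)))
          (volume.restrict (Ioo (0:ℝ) t)) :=
        (aemeasurable_const.mul (hd_m.pow aemeasurable_const)).div
          (hα_m.mul (aemeasurable_const.sub hα_m))
      exact (Real.continuous_sqrt.measurable.comp_aemeasurable this).aestronglyMeasurable
    apply Integrable.mono hdom hmeas
    rw [ae_restrict_iff' measurableSet_Ioo]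
    filter_upwards with s hs
    calc ‖f s‖ ≤ K * s ^ (-(1/2) : ℝ) := hbound s hs
      _ ≤ ‖K * s ^ (-(1/2) : ℝ)‖ := le_abs_self _
  -- closed form for L on [0,1]
  have hLform : ∀ t ∈ Icc (0:ℝ) 1, L t
      = 2 * Real.sqrt N * (π / 2 - Real.arcsin (Real.sqrt (α t))) := by
    intro t ht
    have hgc : ContinuousOn g (Icc 0 t) := by
      have hsub : Icc (0:ℝ) t ⊆ Icc 0 1 := Icc_subset_Icc le_rfl ht.2
      exact continuousOn_const.mul
        (Real.continuous_arcsin.comp_continuousOn ((hαcont.mono hsub).sqrt))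
    have hftc := intervalIntegral.integral_eq_sub_of_hasDeriv_right_of_le ht.1 hgc
      (fun x hx => (hgderiv x ⟨hx.1, lt_of_lt_of_le hx.2 ht.2⟩).hasDerivWithinAt)
      (hfint t ht)
    rw [hL t]
    have hg0 : g 0 = -2 * Real.sqrt N * (π / 2) := by
      rw [hg_def]; simp [hα0, Real.sqrt_one, Real.arcsin_one]
    rw [show (∫ s in (0:ℝ)..t, f s) = g t - g 0 from hftc, hg0, hg_def]
    ring
  -- final computation
  intro i hi
  have hT0 : (0:ℝ) < (T:ℝ) := by exact_mod_cast Nat.lt_of_lt_of_le Nat.zero_lt_one hT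
  set x : ℝ := (i:ℝ) / T with hx_def
  have hx01 : x ∈ Icc (0:ℝ) 1 := by
    constructor
    · positivity
    · rw [hx_def, div_le_one hT0]; exact_mod_cast hi
  have hu : φs x ∈ Icc (0:ℝ) 1 := hmap x hx01
  have h1mem : (1:ℝ) ∈ Icc (0:ℝ) 1 := ⟨zero_le_one, le_rfl⟩
  have hgeq := hgeo x hx01
  rw [hLform (φs x) hu, hLform 1 h1mem] at hgeq
  have hsN : 0 < Real.sqrt N := Real.sqrt_pos.2 hN0
  -- cancel 2√N
  have hkey : π / 2 - Real.arcsin (Real.sqrt (α (φs x)))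
      = (π / 2 - Real.arcsin (Real.sqrt (α 1))) * x := by
    have h2 : (2 * Real.sqrt N) * (π / 2 - Real.arcsin (Real.sqrt (α (φs x))))
        = (2 * Real.sqrt N) * ((π / 2 - Real.arcsin (Real.sqrt (α 1))) * x) := by
      rw [hgeq]; ring
    exact mul_left_cancel₀ (by positivity) h2
  set A : ℝ := π / 2 - Real.arcsin (Real.sqrt (α 1)) with hA_def
  -- bounds on A and x * A
  have hA_nonneg : 0 ≤ A := by
    rw [hA_def]
    have := Real.arcsin_le_pi_div_two (Real.sqrt (α 1))
    linarith
  have hA_le : A ≤ π / 2 := by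
    rw [hA_def]
    have := Real.arcsin_nonneg.2 (Real.sqrt_nonneg (α 1))
    linarith
  have hxA_nonneg : 0 ≤ x * A := mul_nonneg hx01.1 hA_nonneg
  have hxA_le : x * A ≤ π / 2 := by
    calc x * A ≤ 1 * A := mul_le_mul_of_nonneg_right hx01.2 hA_nonneg
      _ = A := one_mul A
      _ ≤ π / 2 := hA_le
  -- arcsin √(α (φs x)) = π/2 - x * A
  have harc_eq : Real.arcsin (Real.sqrt (α (φs x))) = π / 2 - x * A := by
    linarith [hkey]
  have hsqrt_mem : Real.sqrt (α (φs x)) ∈ Icc (-1:ℝ) 1 := by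
    constructor
    · linarith [Real.sqrt_nonneg (α (φs x))]
    · rw [show (1:ℝ) = Real.sqrt 1 by simp]
      exact Real.sqrt_le_sqrt (hαle1 _ hu)
  have hsin : Real.sqrt (α (φs x)) = Real.sin (π / 2 - x * A) := by
    rw [← harc_eq, Real.sin_arcsin hsqrt_mem.1 hsqrt_mem.2]
  rw [Real.sin_pi_div_two_sub] at hsin
  have hfinal : α (φs x) = Real.cos (x * A) ^ 2 := by
    rw [← Real.sq_sqrt (hαpos (φs x)).le, hsin]
  rw [hx_def] at hfinal
  exact hfinal
end

section
/- Let N ≥ 1, let α_t = 1 − t (so α'_t = −1, α₀ = 1, α₁ = 0), and consider the Fisher–Rao metric δ(t) = N·(α'_t)²/(α_t·(1−α_t)) = N/(t·(1−t)) on (0,1). Then the cumulative length is Λ(s) = ∫₀^s √(N/(r(1−r))) dr = 2√N·arcsin(√s), the geodesic schedule generator is φ*(t) = Λ⁻¹(Λ(1)·t) = sin²(π·t/2), and the optimal schedule with T ≥ 1 steps satisfies α_{t_i*} = cos²( (i/T)·(π/2) ) for every 0 ≤ i ≤ T, where t_i* = φ*(i/T); i.e. the optimal schedule is the cosine schedule.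 -/
open Set MeasureTheory Real

private lemma meas_f (N : ℕ) : Measurable (fun r : ℝ => Real.sqrt ((N : ℝ) / (r * (1 - r)))) :=
  (Real.continuous_sqrt.measurable).comp (measurable_const.div (measurable_id.mul (measurable_const.sub measurable_id)))

private lemma int_left (N : ℕ) :
    IntervalIntegrable (fun r : ℝ => Real.sqrt ((N : ℝ) / (r * (1 - r)))) volume 0 (1/2) := by
  have hint : IntervalIntegrable (fun x : ℝ => Real.sqrt (2 * N) * x ^ (-(1/2) : ℝ))
      volume 0 (1/2) :=
    (intervalIntegral.intervalIntegrable_rpow' (by norm_num)).const_mul _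
  refine hint.mono_fun ((meas_f N).aestronglyMeasurable) ?_
  rw [Filter.EventuallyLE, ae_restrict_iff' measurableSet_uIoc]
  refine ae_of_all _ fun x hx => ?_
  rw [uIoc_of_le (by norm_num : (0:ℝ) ≤ 1/2)] at hx
  obtain ⟨hx0, hx2⟩ := hx
  have h1x : (0:ℝ) < 1 - x := by linarith
  have hb : (N : ℝ) / (x * (1 - x)) ≤ 2 * N / x := by
    rw [div_le_div_iff₀ (by positivity) hx0]
    nlinarith [mul_nonneg (mul_nonneg (Nat.cast_nonneg (α := ℝ) N) hx0.le)
      (by linarith : (0:ℝ) ≤ 1 - 2 * x)]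
  have h2 : Real.sqrt (2 * N / x) = Real.sqrt (2 * N) * x ^ (-(1/2) : ℝ) := by
    rw [Real.sqrt_div' (2 * N) (by positivity), Real.rpow_neg hx0.le,
      ← Real.sqrt_eq_rpow, div_eq_mul_inv]
  rw [Real.norm_eq_abs, Real.norm_eq_abs, abs_of_nonneg (Real.sqrt_nonneg _),
    abs_of_nonneg (by positivity)]
  calc Real.sqrt ((N : ℝ) / (x * (1 - x))) ≤ Real.sqrt (2 * N / x) := Real.sqrt_le_sqrt hb
    _ = _ := h2

private lemma int_right (N : ℕ) :
    IntervalIntegrable (fun r : ℝ => Real.sqrt ((N : ℝ) / (r * (1 - r)))) volume (1/2) 1 := by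
  have hint : IntervalIntegrable (fun x : ℝ => Real.sqrt (2 * N) * (1 - x) ^ (-(1/2) : ℝ))
      volume (1/2) 1 := by
    have h0 : IntervalIntegrable (fun x : ℝ => x ^ (-(1/2) : ℝ)) volume 0 (1/2) :=
      intervalIntegral.intervalIntegrable_rpow' (by norm_num)
    have h1 := (h0.comp_sub_left 1).symm
    norm_num at h1
    exact h1.const_mul _
  refine hint.mono_fun ((meas_f N).aestronglyMeasurable) ?_
  rw [Filter.EventuallyLE, ae_restrict_iff' measurableSet_uIoc]
  refine ae_of_all _ fun x hx => ?_
  rw [uIoc_of_le (by norm_num : (1:ℝ)/2 ≤ 1)] at hx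
  obtain ⟨hx0, hx2⟩ := hx
  have hxpos : (0:ℝ) < x := by linarith
  have h1x : (0:ℝ) ≤ 1 - x := by linarith
  have hb : (N : ℝ) / (x * (1 - x)) ≤ 2 * N / (1 - x) := by
    rcases eq_or_lt_of_le hx2 with h | h
    · simp [← h]
    · have h1x' : (0:ℝ) < 1 - x := by linarith
      rw [div_le_div_iff₀ (by positivity) h1x']
      nlinarith [mul_nonneg (mul_nonneg (Nat.cast_nonneg (α := ℝ) N) h1x)
        (by linarith : (0:ℝ) ≤ 2 * x - 1)]
  have h2 : Real.sqrt (2 * N / (1 - x)) = Real.sqrt (2 * N) * (1 - x) ^ (-(1/2) : ℝ) := by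
    rw [Real.sqrt_div' (2 * N) (by positivity), Real.rpow_neg h1x,
      ← Real.sqrt_eq_rpow, div_eq_mul_inv]
  rw [Real.norm_eq_abs, Real.norm_eq_abs, abs_of_nonneg (Real.sqrt_nonneg _),
    abs_of_nonneg (by positivity)]
  calc Real.sqrt ((N : ℝ) / (x * (1 - x))) ≤ Real.sqrt (2 * N / (1 - x)) := Real.sqrt_le_sqrt hb
    _ = _ := h2

private lemma int_full (N : ℕ) :
    IntervalIntegrable (fun r : ℝ => Real.sqrt ((N : ℝ) / (r * (1 - r)))) volume 0 1 :=
  (int_left N).trans (int_right N)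

private lemma hasDeriv_g (N : ℕ) {x : ℝ} (hx0 : 0 < x) (hx1 : x < 1) :
    HasDerivAt (fun s : ℝ => 2 * Real.sqrt N * Real.arcsin (Real.sqrt s))
      (Real.sqrt ((N : ℝ) / (x * (1 - x)))) x := by
  have hsx : (0:ℝ) < Real.sqrt x := Real.sqrt_pos.mpr hx0
  have hsx1 : Real.sqrt x < 1 := by
    rw [show (1:ℝ) = Real.sqrt 1 by simp]
    exact Real.sqrt_lt_sqrt hx0.le hx1
  have hs : HasDerivAt Real.sqrt (1 / (2 * Real.sqrt x)) x := Real.hasDerivAt_sqrt hx0.ne'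
  have ha : HasDerivAt Real.arcsin (1 / Real.sqrt (1 - Real.sqrt x ^ 2)) (Real.sqrt x) :=
    Real.hasDerivAt_arcsin (by linarith) hsx1.ne
  have hcomp := (ha.comp x hs).const_mul (2 * Real.sqrt N)
  refine hcomp.congr_deriv ?_
  symm
  have hxx : Real.sqrt x ^ 2 = x := Real.sq_sqrt hx0.le
  have h1x : (0:ℝ) < 1 - x := by linarith
  have hs1x : (0:ℝ) < Real.sqrt (1 - x) := Real.sqrt_pos.mpr h1x
  rw [hxx, Real.sqrt_div (Nat.cast_nonneg N) _, Real.sqrt_mul hx0.le]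
  field_simp

private lemma L_eq (N : ℕ) {s : ℝ} (hs0 : 0 ≤ s) (hs1 : s ≤ 1) :
    (∫ r in (0:ℝ)..s, Real.sqrt ((N : ℝ) / (r * (1 - r))))
      = 2 * Real.sqrt N * Real.arcsin (Real.sqrt s) := by
  have h := intervalIntegral.integral_eq_sub_of_hasDeriv_right_of_le hs0
    ((continuous_const.mul (Real.continuous_arcsin.comp Real.continuous_sqrt)).continuousOn)
    (fun x hx => (hasDeriv_g N hx.1 (lt_of_lt_of_le hx.2 hs1)).hasDerivWithinAt)
    ((int_full N).mono_set (by
      rw [uIcc_of_le hs0, uIcc_of_le (by norm_num : (0:ℝ) ≤ 1)]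
      exact Icc_subset_Icc le_rfl hs1))
  simpa using h

/-- For masked discrete diffusion with `N ≥ 1` tokens and the linear
noise schedule `α_t = 1 − t` (so `α'_t = −1`, `α₀ = 1`, `α₁ = 0`), the Fisher–Rao
metric is `δ(t) = N·(α'_t)²/(α_t(1−α_t)) = N/(t(1−t))` on `(0,1)`, the cumulative
length is `Λ(s) = ∫₀^s √(N/(r(1−r))) dr = 2√N·arcsin √s`, the geodesic schedule
generator is `φ*(t) = Λ⁻¹(Λ(1)·t) = sin²(π t/2)` (characterised by
`φ*(t) ∈ [0,1]` and `Λ(φ*(t)) = Λ(1)·t`), and the optimal schedule with `T ≥ 1`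
steps satisfies `α_{t_i*} = cos²((i/T)·(π/2))` for `t_i* = φ*(i/T)`, `0 ≤ i ≤ T`:
the cosine schedule. -/
theorem stmt13 (N T : ℕ) (hN : 1 ≤ N) (hT : 1 ≤ T)
    (L : ℝ → ℝ)
    (hL : ∀ s, L s = ∫ r in (0:ℝ)..s, Real.sqrt ((N : ℝ) / (r * (1 - r)))) :
    (∀ t ∈ Ioo (0:ℝ) 1,
      (N : ℝ) * (deriv (fun u : ℝ => 1 - u) t) ^ 2 / ((1 - t) * (1 - (1 - t)))
        = (N : ℝ) / (t * (1 - t))) ∧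
    (∀ s ∈ Icc (0:ℝ) 1, L s = 2 * Real.sqrt (N : ℝ) * Real.arcsin (Real.sqrt s)) ∧
    (∀ t ∈ Icc (0:ℝ) 1,
      Real.sin (π * t / 2) ^ 2 ∈ Icc (0:ℝ) 1 ∧
      L (Real.sin (π * t / 2) ^ 2) = L 1 * t) ∧
    (∀ i : ℕ, i ≤ T →
      1 - Real.sin (π * ((i : ℝ) / T) / 2) ^ 2
        = Real.cos (((i : ℝ) / T) * (π / 2)) ^ 2) := by
  have hLval : ∀ s ∈ Icc (0:ℝ) 1, L s = 2 * Real.sqrt (N : ℝ) * Real.arcsin (Real.sqrt s) := by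
    intro s hs
    rw [hL s, L_eq N hs.1 hs.2]
  have hL1 : L 1 = Real.sqrt (N : ℝ) * π := by
    rw [hLval 1 (by norm_num)]
    rw [Real.sqrt_one, Real.arcsin_one]
    ring
  refine ⟨?_, hLval, ?_, ?_⟩
  · intro t ht
    have h1 : deriv (fun u : ℝ => 1 - u) t = -1 := by
      simpa using (((hasDerivAt_id t).const_sub 1).deriv)
    rw [h1]
    rw [show (1 : ℝ) - (1 - t) = t by ring]
    ring
  · intro t ht
    have hsin : 0 ≤ Real.sin (π * t / 2) := by
      apply Real.sin_nonneg_of_nonneg_of_le_pi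
      · nlinarith [Real.pi_pos, ht.1]
      · nlinarith [Real.pi_pos, ht.2]
    constructor
    · exact ⟨sq_nonneg _, Real.sin_sq_le_one _⟩
    · rw [hLval _ ⟨sq_nonneg _, Real.sin_sq_le_one _⟩, Real.sqrt_sq hsin,
        Real.arcsin_sin (by nlinarith [Real.pi_pos, ht.1]) (by nlinarith [Real.pi_pos, ht.2]),
        hL1]
      ring
  · intro i hi
    rw [show ((i:ℝ)/T) * (π/2) = π * ((i:ℝ)/T) / 2 by ring, Real.cos_sq']
end
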